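/- Let w : ℝⁿ → ℝ be differentiable and 1-strongly convex with respect to a quadratic norm ‖·‖ (given by s.p.d. matrix Q), with Bregman divergence V_x(y) = w(y) − ⟨∇w(x), y−x⟩ − w(x). Consider linear coupling iterates with z_{k+1} = argmin_y { V_{zₖ}(y) + ⟨α_{k+1}∇f(xₖ), y − xₖ⟩ }. Then for any minimizer x⋆ of f: α_{k+1}⟨∇f(xₖ), zₖ − x⋆⟩ ≤ (α_{k+1}²/2)‖∇f(xₖ)‖*² + V_{zₖ}(x⋆) − V_{z_{k+1}}(x⋆). -/

import Mathlib

open RealInnerProductSpace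

/-- First-order condition for a convex differentiable function. -/
lemma first_order_aux {E : Type*} [NormedAddCommGroup E] [InnerProductSpace ℝ E] [CompleteSpace E]
    {g : E → ℝ} {g' : E → E} (hc : ConvexOn ℝ Set.univ g)
    (hd : ∀ x, HasGradientAt g (g' x) x) (x y : E) :
    g x + ⟪g' x, y - x⟫ ≤ g y := by
  set φ : ℝ → ℝ := fun t => g (x + t • (y - x)) with hφ
  have hline : ∀ t : ℝ, HasDerivAt (fun t : ℝ => x + t • (y - x)) (y - x) t := by
    intro t
    simpa using ((hasDerivAt_id t).smul_const (y - x)).const_add x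
  have hder : HasDerivAt φ ⟪g' x, y - x⟫ 0 := by
    have h1 : HasFDerivAt g (InnerProductSpace.toDual ℝ E (g' x))
        ((fun t : ℝ => x + t • (y - x)) 0) := by
      simpa using (hd x).hasFDerivAt
    have := h1.comp_hasDerivAt (0:ℝ) (hline 0)
    simp [InnerProductSpace.toDual_apply_apply] at this
    exact this
  have hφc : ConvexOn ℝ Set.univ φ := by
    have := hc.comp_affineMap (AffineMap.lineMap x y)
    have heq : (g ∘ ⇑(AffineMap.lineMap x y)) = φ := by
      funext t; simp [hφ, AffineMap.lineMap_apply, add_comm]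
    simpa [Set.preimage_univ, heq] using this
  have := hφc.le_slope_of_hasDerivAt (Set.mem_univ (0:ℝ)) (Set.mem_univ (1:ℝ))
    one_pos hder
  rw [slope_def_field] at this
  simp only [hφ, one_smul, zero_smul, add_zero, add_sub_cancel] at this
  have h2 : ⟪g' x, y - x⟫ ≤ g y - g x := by simpa using this
  linarith

/-- Gradient of the quadratic form `x ↦ (1/2)⟪x, Qx⟫` for symmetric `Q`. -/
lemma quad_gradient_aux {E : Type*} [NormedAddCommGroup E] [InnerProductSpace ℝ E]
    [CompleteSpace E] (Q : E →L[ℝ] E) (hsymm : ∀ x y, ⟪Q x, y⟫ = ⟪x, Q y⟫) (x : E) :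
    HasGradientAt (fun x => (1/2 : ℝ) * ⟪x, Q x⟫) (Q x) x := by
  rw [hasGradientAt_iff_hasFDerivAt]
  have h1 : HasFDerivAt (fun y => ⟪y, Q y⟫)
      ((fderivInnerCLM ℝ (x, Q x)).comp ((ContinuousLinearMap.id ℝ _).prod Q)) x :=
    (hasFDerivAt_id x).inner ℝ (Q.hasFDerivAt)
  have h2 := h1.const_mul (1/2 : ℝ)
  refine h2.congr_fderiv ?_
  ext h
  simp [fderivInnerCLM_apply, InnerProductSpace.toDual_apply_apply, real_inner_comm (Q x) h,
    ← hsymm x h]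
  ring

/-- Mirror-descent step guarantee (Allen-Zhu–Orecchia Lemma 4.2, first part)
for a Bregman divergence generated by a distance generating function `w` that is
1-strongly convex with respect to the quadratic norm `‖x‖² = ⟨x, Qx⟩`
(dual norm `‖u‖*² = ⟨u, Q⁻¹u⟩`). -/
theorem mirror_descent_step (n : ℕ)
    (Q Qinv : EuclideanSpace ℝ (Fin n) →L[ℝ] EuclideanSpace ℝ (Fin n))
    (hsymm : ∀ x y, ⟪Q x, y⟫ = ⟪x, Q y⟫)
    (hpd : ∀ x, x ≠ 0 → 0 < ⟪x, Q x⟫)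
    (hinv₁ : ∀ x, Q (Qinv x) = x) (hinv₂ : ∀ x, Qinv (Q x) = x)
    (f : EuclideanSpace ℝ (Fin n) → ℝ)
    (f' : EuclideanSpace ℝ (Fin n) → EuclideanSpace ℝ (Fin n))
    (L : ℝ) (hL : 0 < L)
    (hdiff : ∀ x, HasGradientAt f (f' x) x)
    (hconv : ConvexOn ℝ Set.univ f)
    (hsmooth : ∀ x y, Real.sqrt ⟪f' x - f' y, Qinv (f' x - f' y)⟫
      ≤ L * Real.sqrt ⟪x - y, Q (x - y)⟫)
    (xstar : EuclideanSpace ℝ (Fin n)) (hmin : ∀ y, f xstar ≤ f y)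
    (w : EuclideanSpace ℝ (Fin n) → ℝ)
    (w' : EuclideanSpace ℝ (Fin n) → EuclideanSpace ℝ (Fin n))
    (hwdiff : ∀ x, HasGradientAt w (w' x) x)
    (hwsc : ConvexOn ℝ Set.univ (fun x => w x - (1 / 2) * ⟪x, Q x⟫))
    (V : EuclideanSpace ℝ (Fin n) → EuclideanSpace ℝ (Fin n) → ℝ)
    (hV : ∀ a b, V a b = w b - ⟪w' a, b - a⟫ - w a)
    (α : ℝ) (hα : 0 < α)
    (xk zk zk1 : EuclideanSpace ℝ (Fin n))
    (hargmin : IsMinOn (fun y => V zk y + α * ⟪f' xk, y - xk⟫) Set.univ zk1) :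
    α * ⟪f' xk, zk - xstar⟫
      ≤ (α ^ 2 / 2) * ⟪f' xk, Qinv (f' xk)⟫ + V zk xstar - V zk1 xstar := by
  set g : EuclideanSpace ℝ (Fin n) := f' xk with hg
  -- Step 1: first-order optimality at zk1 (unconstrained minimum ⇒ gradient zero)
  have hopt : w' zk - w' zk1 = α • g := by
    have hloc : IsLocalMin (fun y => V zk y + α * ⟪g, y - xk⟫) zk1 :=
      hargmin.isLocalMin (by simp)
    have hFD : HasFDerivAt (fun y => V zk y + α * ⟪g, y - xk⟫)
        (InnerProductSpace.toDual ℝ (EuclideanSpace ℝ (Fin n)) (w' zk1 - w' zk + α • g)) zk1 := by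
      have hw1 : HasFDerivAt w (InnerProductSpace.toDual ℝ (EuclideanSpace ℝ (Fin n)) (w' zk1)) zk1 :=
        (hwdiff zk1).hasFDerivAt
      have hlin : ∀ c : EuclideanSpace ℝ (Fin n), HasFDerivAt (fun y : EuclideanSpace ℝ (Fin n) => ⟪c, y - xk⟫)
          (InnerProductSpace.toDual ℝ (EuclideanSpace ℝ (Fin n)) c) zk1 := by
        intro c
        have := (InnerProductSpace.toDual ℝ (EuclideanSpace ℝ (Fin n)) c).hasFDerivAt (x := zk1)
        have h2 := this.sub_const ⟪c, xk⟫
        have heq : (fun y : EuclideanSpace ℝ (Fin n) => ⟪c, y - xk⟫)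
            = fun y : EuclideanSpace ℝ (Fin n) => (InnerProductSpace.toDual ℝ (EuclideanSpace ℝ (Fin n)) c) y - ⟪c, xk⟫ := by
          funext y; simp [inner_sub_right]
        rw [heq]; exact h2
      have hlin2 : ∀ c : EuclideanSpace ℝ (Fin n), HasFDerivAt (fun y : EuclideanSpace ℝ (Fin n) => ⟪c, y - zk⟫)
          (InnerProductSpace.toDual ℝ (EuclideanSpace ℝ (Fin n)) c) zk1 := by
        intro c
        have := (InnerProductSpace.toDual ℝ (EuclideanSpace ℝ (Fin n)) c).hasFDerivAt (x := zk1)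
        have h2 := this.sub_const ⟪c, zk⟫
        have heq : (fun y : EuclideanSpace ℝ (Fin n) => ⟪c, y - zk⟫)
            = fun y : EuclideanSpace ℝ (Fin n) => (InnerProductSpace.toDual ℝ (EuclideanSpace ℝ (Fin n)) c) y - ⟪c, zk⟫ := by
          funext y; simp [inner_sub_right]
        rw [heq]; exact h2
      have hsum := ((hw1.sub (hlin2 (w' zk))).sub_const (w zk)).add
        ((hlin g).const_mul α)
      have heq2 : (fun y => V zk y + α * ⟪g, y - xk⟫)
          = fun y => (w y - ⟪w' zk, y - zk⟫ - w zk) + α * ⟪g, y - xk⟫ := by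
        funext y; rw [hV]
      rw [heq2]
      refine hsum.congr_fderiv ?_
      ext h
      simp [InnerProductSpace.toDual_apply_apply, inner_add_left, inner_sub_left,
        real_inner_smul_left]
    have hzero := hloc.hasFDerivAt_eq_zero hFD
    have : w' zk1 - w' zk + α • g = 0 := by
      have := congrArg (fun (T : EuclideanSpace ℝ (Fin n) →L[ℝ] ℝ) =>
        (InnerProductSpace.toDual ℝ (EuclideanSpace ℝ (Fin n))).symm T) hzero
      simpa using this
    have h3 : w' zk1 - w' zk = -(α • g) := by
      rwa [← eq_neg_iff_add_eq_zero] at this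
    have := congrArg Neg.neg h3
    simpa [neg_sub] using this
  -- Step 2: strong convexity ⇒ V zk zk1 ≥ (1/2)‖zk1 - zk‖²
  have hsc : (1/2 : ℝ) * ⟪zk1 - zk, Q (zk1 - zk)⟫ ≤ V zk zk1 := by
    have hgrad : ∀ x : EuclideanSpace ℝ (Fin n), HasGradientAt (fun x => w x - (1/2 : ℝ) * ⟪x, Q x⟫)
        (w' x - Q x) x := by
      intro x
      rw [hasGradientAt_iff_hasFDerivAt] at *
      have := ((hwdiff x).hasFDerivAt).sub ((quad_gradient_aux Q hsymm x).hasFDerivAt)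
      refine this.congr_fderiv ?_
      ext h
      simp [InnerProductSpace.toDual_apply_apply, inner_sub_left]
    have := first_order_aux hwsc hgrad zk zk1
    rw [hV]
    have hexp : ⟪w' zk - Q zk, zk1 - zk⟫ = ⟪w' zk, zk1 - zk⟫ - ⟪Q zk, zk1 - zk⟫ := by
      simp [inner_sub_left]
    have hquad : ⟪zk1 - zk, Q (zk1 - zk)⟫
        = ⟪zk1, Q zk1⟫ - 2 * ⟪Q zk, zk1 - zk⟫ - ⟪zk, Q zk⟫ := by
      simp only [map_sub, inner_sub_left, inner_sub_right]
      have h1 := hsymm zk zk1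
      have h2 := real_inner_comm zk1 (Q zk)
      have h3 := real_inner_comm zk (Q zk1)
      linarith [real_inner_comm zk (Q zk)]
    linarith [this]
  -- Step 3: Young's inequality  α⟪g, u⟫ ≤ (α²/2)⟪g, Qinv g⟫ + (1/2)⟪u, Qu⟫
  have hyoung : α * ⟪g, zk - zk1⟫
      ≤ (α ^ 2 / 2) * ⟪g, Qinv g⟫ + (1/2 : ℝ) * ⟪zk - zk1, Q (zk - zk1)⟫ := by
    set u : EuclideanSpace ℝ (Fin n) := zk - zk1 with hu
    have hnn : 0 ≤ ⟪u - α • Qinv g, Q (u - α • Qinv g)⟫ := by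
      rcases eq_or_ne (u - α • Qinv g) 0 with h | h
      · simp [h]
      · exact (hpd _ h).le
    have hexp : ⟪u - α • Qinv g, Q (u - α • Qinv g)⟫
        = ⟪u, Q u⟫ - 2 * α * ⟪g, u⟫ + α ^ 2 * ⟪g, Qinv g⟫ := by
      simp only [map_sub, map_smul, inner_sub_left, inner_sub_right,
        real_inner_smul_left, real_inner_smul_right, hinv₁]
      have h1 : ⟪Qinv g, Q u⟫ = ⟪g, u⟫ := by
        rw [← hsymm, hinv₁]
      have h2 : ⟪u, g⟫ = ⟪g, u⟫ := real_inner_comm g u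
      have h3 : ⟪Qinv g, g⟫ = ⟪g, Qinv g⟫ := real_inner_comm _ _
      rw [h1, h2, h3]; ring
    nlinarith [hnn, hexp]
  -- Step 4: three-point identity
  have hthree : α * ⟪g, zk1 - xstar⟫ = V zk xstar - V zk1 xstar - V zk zk1 := by
    have h1 : α * ⟪g, zk1 - xstar⟫ = ⟪w' zk - w' zk1, zk1 - xstar⟫ := by
      rw [hopt, real_inner_smul_left]
    rw [h1, hV, hV, hV]
    simp only [inner_sub_left, inner_sub_right]
    ring
  -- Combine
  have hsplit : ⟪g, zk - xstar⟫ = ⟪g, zk - zk1⟫ + ⟪g, zk1 - xstar⟫ := by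
    rw [← inner_add_right]; congr 1; abel
  have : α * ⟪g, zk - xstar⟫
      = α * ⟪g, zk - zk1⟫ + α * ⟪g, zk1 - xstar⟫ := by rw [hsplit]; ring
  have hQsame : ⟪zk - zk1, Q (zk - zk1)⟫ = ⟪zk1 - zk, Q (zk1 - zk)⟫ := by
    rw [show zk - zk1 = -(zk1 - zk) from by abel, map_neg, inner_neg_neg]
  linarith
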